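/- For all Ω, λ ∈ ℝ and ξ ∈ ℝ², a real number E is an eigenvalue of H₊(ξ) if and only if E² = Ω² + λ²/2 + |ξ|² + √((4Ω² + λ²)|ξ|² + λ⁴/4) or E² = Ω² + λ²/2 + |ξ|² − √((4Ω² + λ²)|ξ|² + λ⁴/4). -/

import Mathlib

open Complex Matrix

/-- The Fourier-domain bulk Hamiltonian of gated twisted bilayer graphene with
AB stacking (valley `η = 1`). -/
noncomputable def Hplus (Ω lam : ℝ) (ξ : ℝ × ℝ) : Matrix (Fin 4) (Fin 4) ℂ :=
  !![(Ω : ℂ), (ξ.1 : ℂ) - (ξ.2 : ℂ) * I, 0, 0;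
     (ξ.1 : ℂ) + (ξ.2 : ℂ) * I, (Ω : ℂ), (lam : ℂ), 0;
     0, (lam : ℂ), -(Ω : ℂ), (ξ.1 : ℂ) - (ξ.2 : ℂ) * I;
     0, 0, (ξ.1 : ℂ) + (ξ.2 : ℂ) * I, -(Ω : ℂ)]

lemma det_smul_sub_Hplus (Ω lam : ℝ) (ξ : ℝ × ℝ) (E : ℝ) :
    ((E : ℂ) • (1 : Matrix (Fin 4) (Fin 4) ℂ) - Hplus Ω lam ξ).det =
      (((E ^ 2 - (Ω ^ 2 + lam ^ 2 / 2 + (ξ.1 ^ 2 + ξ.2 ^ 2))) ^ 2 -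
        ((4 * Ω ^ 2 + lam ^ 2) * (ξ.1 ^ 2 + ξ.2 ^ 2) + lam ^ 4 / 4) : ℝ) : ℂ) := by
  have h : ((E : ℂ) • (1 : Matrix (Fin 4) (Fin 4) ℂ) - Hplus Ω lam ξ) =
      !![(E : ℂ) - Ω, -((ξ.1 : ℂ) - (ξ.2 : ℂ) * I), 0, 0;
         -((ξ.1 : ℂ) + (ξ.2 : ℂ) * I), (E : ℂ) - Ω, -(lam : ℂ), 0;
         0, -(lam : ℂ), (E : ℂ) + Ω, -((ξ.1 : ℂ) - (ξ.2 : ℂ) * I);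
         0, 0, -((ξ.1 : ℂ) + (ξ.2 : ℂ) * I), (E : ℂ) + Ω] := by
    ext i j
    fin_cases i <;> fin_cases j <;>
      simp [Hplus, Matrix.one_apply, Matrix.smul_apply, Matrix.vecHead, Matrix.vecTail] <;> ring
  rw [h]
  simp [Matrix.det_succ_row_zero, Fin.sum_univ_succ, Matrix.vecHead, Matrix.vecTail, Fin.succ, Fin.succAbove]
  push_cast
  ring_nf
  linear_combination (2 * (E:ℂ) ^ 2 * (ξ.2:ℂ) ^ 2 + 2 * (Ω:ℂ) ^ 2 * (ξ.2:ℂ) ^ 2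
    - 2 * (ξ.1:ℂ) ^ 2 * (ξ.2:ℂ) ^ 2 + (ξ.2:ℂ) ^ 4 * (Complex.I ^ 2 - 1)) * Complex.I_sq

/-- A real number `E` is an eigenvalue of `H₊(ξ)` iff
`E² = Ω² + λ²/2 + |ξ|² ± √((4Ω² + λ²)|ξ|² + λ⁴/4)`. -/
theorem real_eigenvalue_Hplus_iff (Ω lam : ℝ) (ξ : ℝ × ℝ) (E : ℝ) :
    (E : ℂ) ∈ spectrum ℂ (Hplus Ω lam ξ) ↔
      E ^ 2 = Ω ^ 2 + lam ^ 2 / 2 + (ξ.1 ^ 2 + ξ.2 ^ 2) +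
          Real.sqrt ((4 * Ω ^ 2 + lam ^ 2) * (ξ.1 ^ 2 + ξ.2 ^ 2) + lam ^ 4 / 4) ∨
      E ^ 2 = Ω ^ 2 + lam ^ 2 / 2 + (ξ.1 ^ 2 + ξ.2 ^ 2) -
          Real.sqrt ((4 * Ω ^ 2 + lam ^ 2) * (ξ.1 ^ 2 + ξ.2 ^ 2) + lam ^ 4 / 4) := by
  set S : ℝ := Ω ^ 2 + lam ^ 2 / 2 + (ξ.1 ^ 2 + ξ.2 ^ 2) with hS
  set D : ℝ := (4 * Ω ^ 2 + lam ^ 2) * (ξ.1 ^ 2 + ξ.2 ^ 2) + lam ^ 4 / 4 with hD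
  have hD0 : 0 ≤ D := by
    rw [hD]
    have h1 : 0 ≤ 4 * Ω ^ 2 + lam ^ 2 := by positivity
    have h2 : 0 ≤ ξ.1 ^ 2 + ξ.2 ^ 2 := by positivity
    nlinarith [mul_nonneg h1 h2]
  have hsq : Real.sqrt D ^ 2 = D := Real.sq_sqrt hD0
  have h1 : (E : ℂ) ∈ spectrum ℂ (Hplus Ω lam ξ) ↔ (E ^ 2 - S) ^ 2 - D = 0 := by
    rw [spectrum.mem_iff, Algebra.algebraMap_eq_smul_one, Matrix.isUnit_iff_isUnit_det,
      isUnit_iff_ne_zero, not_not, det_smul_sub_Hplus]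
    exact_mod_cast Complex.ofReal_eq_zero
  rw [h1, sub_eq_zero]
  constructor
  · intro h
    rcases sq_eq_sq_iff_eq_or_eq_neg.mp (h.trans hsq.symm) with h' | h'
    · left; linarith
    · right; linarith
  · rintro (h | h)
    · have h' : E ^ 2 - S = Real.sqrt D := by linarith
      rw [h', hsq]
    · have h' : E ^ 2 - S = -Real.sqrt D := by linarith
      rw [h', neg_sq, hsq]
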